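/- arXiv:2209.06954 — 2 statements merged into one kernel-verified Lean document; each statement's English description precedes it below -/
import Mathlib

section
/- Under the same representation-learning assumptions (T^v a representation of X^v and T^l a representation of X^l), the joint mutual information admits the bound I(X^v, X^l; T^v, T^l) ≤ (3/2)[I(X^v; T^v) + I(X^l; T^l)]. -/
open scoped BigOperators

/-- A probability distribution on a finite sample space. -/
structure FinProb (Ω : Type) [Fintype Ω] where
  p : Ω → ℝ
  nonneg : ∀ ω, 0 ≤ p ω
  sum_one : ∑ ω, p ω = 1

/-- Probability that a discrete random variable `X` takes the value `a`. -/
noncomputable def probOf {Ω α : Type} [Fintype Ω] [Fintype α] [DecidableEq α]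
    (μ : FinProb Ω) (X : Ω → α) (a : α) : ℝ :=
  ∑ ω, if X ω = a then μ.p ω else 0

/-- Shannon entropy of a discrete random variable. -/
noncomputable def entropy {Ω α : Type} [Fintype Ω] [Fintype α] [DecidableEq α]
    (μ : FinProb Ω) (X : Ω → α) : ℝ :=
  ∑ a, Real.negMulLog (probOf μ X a)

/-- Conditional Shannon entropy `H(X|Y) = H(X,Y) - H(Y)`. -/
noncomputable def condEntropy {Ω α β : Type} [Fintype Ω] [Fintype α] [DecidableEq α]
    [Fintype β] [DecidableEq β] (μ : FinProb Ω) (X : Ω → α) (Y : Ω → β) : ℝ :=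
  entropy μ (fun ω => (X ω, Y ω)) - entropy μ Y

/-- Mutual information `I(X;Z) = H(X) + H(Z) - H(X,Z)`. -/
noncomputable def mutualInfo {Ω α β : Type} [Fintype Ω] [Fintype α] [DecidableEq α]
    [Fintype β] [DecidableEq β] (μ : FinProb Ω) (X : Ω → α) (Z : Ω → β) : ℝ :=
  entropy μ X + entropy μ Z - entropy μ (fun ω => (X ω, Z ω))

/-- Conditional mutual information `I(X;Z|Y) = H(X|Y) + H(Z|Y) - H(X,Z|Y)`. -/
noncomputable def condMutualInfo {Ω α β γ : Type} [Fintype Ω] [Fintype α] [DecidableEq α]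
    [Fintype β] [DecidableEq β] [Fintype γ] [DecidableEq γ]
    (μ : FinProb Ω) (X : Ω → α) (Z : Ω → β) (Y : Ω → γ) : ℝ :=
  condEntropy μ X Y + condEntropy μ Z Y - condEntropy μ (fun ω => (X ω, Z ω)) Y

/-- Conditional probability `p(t|x)` of `T = t` given `X = x`. -/
noncomputable def condProb {Ω α β : Type} [Fintype Ω] [Fintype α] [DecidableEq α]
    [Fintype β] [DecidableEq β] (μ : FinProb Ω) (T : Ω → β) (X : Ω → α) (t : β) (x : α) : ℝ :=
  probOf μ (fun ω => (T ω, X ω)) (t, x) / probOf μ X x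

/-- Expected KL divergence `KL(p(t|x₁) ‖ q(t|x₂))` between two channels sharing a
representation space, averaged over the joint law of `(X₁, X₂)`. -/
noncomputable def klChannels {Ω α₁ α₂ γ : Type} [Fintype Ω] [Fintype α₁] [DecidableEq α₁]
    [Fintype α₂] [DecidableEq α₂] [Fintype γ] [DecidableEq γ] (μ : FinProb Ω)
    (T₁ : Ω → γ) (X₁ : Ω → α₁) (T₂ : Ω → γ) (X₂ : Ω → α₂) : ℝ :=
  ∑ x : α₁ × α₂, probOf μ (fun ω => (X₁ ω, X₂ ω)) x *
    ∑ t : γ, condProb μ T₁ X₁ t x.1 *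
      Real.log (condProb μ T₁ X₁ t x.1 / condProb μ T₂ X₂ t x.2)

section Aux

set_option linter.unusedSectionVars false

lemma term_ineq' (j pa pb c : ℝ) (hj : 0 ≤ j) (hpa : j ≤ pa) (hpb : j ≤ pb) (hc : pa ≤ c) :
    j - pa * pb / c ≤ j * Real.log j + j * Real.log c - j * Real.log pa - j * Real.log pb := by
  rcases eq_or_lt_of_le hj with h0 | h0
  · have hpa0 : 0 ≤ pa := le_trans hj hpa
    have hpb0 : 0 ≤ pb := le_trans hj hpb
    have hc0 : 0 ≤ c := le_trans hpa0 hc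
    have : 0 ≤ pa * pb / c := div_nonneg (mul_nonneg hpa0 hpb0) hc0
    rw [← h0]; simp; linarith
  · have hpa0 : 0 < pa := lt_of_lt_of_le h0 hpa
    have hpb0 : 0 < pb := lt_of_lt_of_le h0 hpb
    have hc0 : 0 < c := lt_of_lt_of_le hpa0 hc
    have hr : 0 < pa * pb / (j * c) := by positivity
    have hlog := Real.log_le_sub_one_of_pos hr
    have hexp : Real.log (pa * pb / (j * c)) =
        Real.log pa + Real.log pb - Real.log j - Real.log c := by
      rw [Real.log_div (by positivity) (by positivity), Real.log_mul (ne_of_gt hpa0)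
        (ne_of_gt hpb0), Real.log_mul (ne_of_gt h0) (ne_of_gt hc0)]
      ring
    rw [hexp] at hlog
    have hmul := mul_le_mul_of_nonneg_left hlog hj
    have hid : j * (pa * pb / (j * c) - 1) = pa * pb / c - j := by
      field_simp
    rw [hid] at hmul
    nlinarith [hmul]

open Finset in
lemma key_sum_ineq {α β δ : Type} [Fintype α] [Fintype β] [Fintype δ]
    (J : α → δ → β → ℝ) (hJ : ∀ x z y, 0 ≤ J x z y) :
    (∑ x, ∑ z, ∑ y, Real.negMulLog (J x z y)) + ∑ y, Real.negMulLog (∑ x, ∑ z, J x z y)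
      ≤ (∑ x, ∑ y, Real.negMulLog (∑ z, J x z y)) +
        ∑ z, ∑ y, Real.negMulLog (∑ x, J x z y) := by
  have hpxy : ∀ x y, 0 ≤ ∑ z, J x z y := fun x y => sum_nonneg fun z _ => hJ x z y
  have hzero : ∑ y, ∑ x, ∑ z,
      (J x z y - (∑ z', J x z' y) * (∑ x', J x' z y) / (∑ x', ∑ z', J x' z' y)) = 0 := by
    refine Finset.sum_eq_zero fun y _ => ?_
    have h1 : ∑ x, ∑ z,
        ((∑ z', J x z' y) * (∑ x', J x' z y) / (∑ x', ∑ z', J x' z' y))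
        = (∑ x, ∑ z', J x z' y) * (∑ z, ∑ x', J x' z y) / (∑ x', ∑ z', J x' z' y) := by
      rw [Finset.sum_mul]
      rw [Finset.sum_div]
      refine Finset.sum_congr rfl fun x _ => ?_
      rw [Finset.mul_sum, Finset.sum_div]
    have h2 : (∑ z, ∑ x', J x' z y) = ∑ x', ∑ z', J x' z' y := Finset.sum_comm
    simp only [Finset.sum_sub_distrib]
    rw [h1, h2]
    rcases eq_or_ne (∑ x', ∑ z', J x' z' y) 0 with h | h
    · rw [h]; simp
    · rw [mul_div_assoc, div_self h, mul_one, sub_self]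
  have hle : ∑ y, ∑ x, ∑ z,
      (J x z y - (∑ z', J x z' y) * (∑ x', J x' z y) / (∑ x', ∑ z', J x' z' y))
      ≤ ∑ y, ∑ x, ∑ z,
      (J x z y * Real.log (J x z y) + J x z y * Real.log (∑ x', ∑ z', J x' z' y)
        - J x z y * Real.log (∑ z', J x z' y) - J x z y * Real.log (∑ x', J x' z y)) := by
    refine Finset.sum_le_sum fun y _ => Finset.sum_le_sum fun x _ => Finset.sum_le_sum
      fun z _ => ?_
    refine term_ineq' _ _ _ _ (hJ x z y) ?_ ?_ ?_
    · exact Finset.single_le_sum (fun z' _ => hJ x z' y) (mem_univ z)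
    · exact Finset.single_le_sum (fun x' _ => hJ x' z y) (mem_univ x)
    · exact Finset.single_le_sum (f := fun x' => ∑ z', J x' z' y)
        (fun x' _ => hpxy x' y) (mem_univ x)
  rw [hzero] at hle
  have hsplit : ∑ y, ∑ x, ∑ z,
      (J x z y * Real.log (J x z y) + J x z y * Real.log (∑ x', ∑ z', J x' z' y)
        - J x z y * Real.log (∑ z', J x z' y) - J x z y * Real.log (∑ x', J x' z y))
      = (- ∑ x, ∑ z, ∑ y, Real.negMulLog (J x z y))
        + (- ∑ y, Real.negMulLog (∑ x, ∑ z, J x z y))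
        + (∑ x, ∑ y, Real.negMulLog (∑ z, J x z y))
        + (∑ z, ∑ y, Real.negMulLog (∑ x, J x z y)) := by
    have A1 : ∑ y, ∑ x, ∑ z, J x z y * Real.log (J x z y)
        = - ∑ x, ∑ z, ∑ y, Real.negMulLog (J x z y) := by
      rw [Finset.sum_comm (f := fun y x => ∑ z, J x z y * Real.log (J x z y))]
      have hc : ∀ x : α, ∑ y, ∑ z, J x z y * Real.log (J x z y)
          = ∑ z, ∑ y, J x z y * Real.log (J x z y) := fun x => Finset.sum_comm
      rw [Finset.sum_congr rfl fun x _ => hc x]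
      simp [Real.negMulLog, neg_mul]
    have A2 : ∑ y, ∑ x, ∑ z, J x z y * Real.log (∑ x', ∑ z', J x' z' y)
        = - ∑ y, Real.negMulLog (∑ x, ∑ z, J x z y) := by
      have h : ∀ y : β, ∑ x, ∑ z, J x z y * Real.log (∑ x', ∑ z', J x' z' y)
          = (∑ x : α, ∑ z : δ, J x z y) * Real.log (∑ x', ∑ z', J x' z' y) := by
        intro y
        rw [Finset.sum_mul]
        exact Finset.sum_congr rfl fun x _ => by rw [Finset.sum_mul]
      rw [Finset.sum_congr rfl fun y _ => h y]
      simp [Real.negMulLog, neg_mul]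
    have A3 : ∑ y, ∑ x, ∑ z, J x z y * Real.log (∑ z', J x z' y)
        = - ∑ x, ∑ y, Real.negMulLog (∑ z, J x z y) := by
      rw [Finset.sum_comm (f := fun y x => ∑ z, J x z y * Real.log (∑ z', J x z' y))]
      have h : ∀ x : α, ∀ y : β, ∑ z, J x z y * Real.log (∑ z', J x z' y)
          = (∑ z : δ, J x z y) * Real.log (∑ z', J x z' y) := by
        intro x y; rw [Finset.sum_mul]
      rw [Finset.sum_congr rfl fun x _ => Finset.sum_congr rfl fun y _ => h x y]
      simp [Real.negMulLog, neg_mul]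
    have A4 : ∑ y, ∑ x, ∑ z, J x z y * Real.log (∑ x', J x' z y)
        = - ∑ z, ∑ y, Real.negMulLog (∑ x, J x z y) := by
      have h : ∀ y, ∑ x, ∑ z, J x z y * Real.log (∑ x', J x' z y)
          = ∑ z, (∑ x, J x z y) * Real.log (∑ x', J x' z y) := by
        intro y
        rw [Finset.sum_comm]
        exact Finset.sum_congr rfl fun z _ => by rw [Finset.sum_mul]
      rw [Finset.sum_congr rfl fun y _ => h y]
      rw [Finset.sum_comm]
      simp [Real.negMulLog, neg_mul]
    have hsum : ∑ y, ∑ x, ∑ z,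
        (J x z y * Real.log (J x z y) + J x z y * Real.log (∑ x', ∑ z', J x' z' y)
          - J x z y * Real.log (∑ z', J x z' y) - J x z y * Real.log (∑ x', J x' z y))
        = (∑ y, ∑ x, ∑ z, J x z y * Real.log (J x z y))
          + (∑ y, ∑ x, ∑ z, J x z y * Real.log (∑ x', ∑ z', J x' z' y))
          - (∑ y, ∑ x, ∑ z, J x z y * Real.log (∑ z', J x z' y))
          - (∑ y, ∑ x, ∑ z, J x z y * Real.log (∑ x', J x' z y)) := by
      simp only [Finset.sum_add_distrib, Finset.sum_sub_distrib]
    rw [hsum, A1, A2, A3, A4]; ring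
  rw [hsplit] at hle
  linarith

variable {Ω α β δ : Type} [Fintype Ω] [Fintype α] [DecidableEq α]
  [Fintype β] [DecidableEq β] [Fintype δ] [DecidableEq δ]

lemma probOf_nonneg (μ : FinProb Ω) (X : Ω → α) (a : α) : 0 ≤ probOf μ X a :=
  Finset.sum_nonneg fun ω _ => by split <;> simp [μ.nonneg ω]

lemma probOf_comp_inj (μ : FinProb Ω) (X : Ω → α) (e : α → β) (he : Function.Injective e)
    (a : α) : probOf μ (fun ω => e (X ω)) (e a) = probOf μ X a := by
  unfold probOf
  refine Finset.sum_congr rfl fun ω _ => ?_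
  simp [he.eq_iff]

lemma probOf_comp_notin (μ : FinProb Ω) (X : Ω → α) (e : α → β) (b : β)
    (hb : ∀ a, e a ≠ b) : probOf μ (fun ω => e (X ω)) b = 0 := by
  unfold probOf
  refine Finset.sum_eq_zero fun ω _ => by simp [hb (X ω)]

lemma entropy_comp_inj (μ : FinProb Ω) (X : Ω → α) (e : α → β)
    (he : Function.Injective e) : entropy μ (fun ω => e (X ω)) = entropy μ X := by
  unfold entropy
  have h1 : ∑ b : β, Real.negMulLog (probOf μ (fun ω => e (X ω)) b)
      = ∑ b ∈ Finset.univ.image e, Real.negMulLog (probOf μ (fun ω => e (X ω)) b) := by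
    refine (Finset.sum_subset (Finset.subset_univ _) ?_).symm
    intro b _ hb
    rw [probOf_comp_notin μ X e b, Real.negMulLog_zero]
    intro a hab
    exact hb (Finset.mem_image.2 ⟨a, Finset.mem_univ a, hab⟩)
  rw [h1, Finset.sum_image (fun a _ b _ h => he h)]
  exact Finset.sum_congr rfl fun a _ => by rw [probOf_comp_inj μ X e he]

lemma entropy_congr_inj (μ : FinProb Ω) (X : Ω → α) (Y : Ω → β) (e : α → β)
    (he : Function.Injective e) (h : ∀ ω, Y ω = e (X ω)) :
    entropy μ Y = entropy μ X := by
  have : Y = fun ω => e (X ω) := funext h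
  rw [this, entropy_comp_inj μ X e he]

lemma probOf_marg_snd' (μ : FinProb Ω) (X : Ω → α) (Z : Ω → δ) (b : δ) :
    probOf μ Z b = ∑ a, probOf μ (fun ω => (X ω, Z ω)) (a, b) := by
  unfold probOf
  rw [Finset.sum_comm]
  refine Finset.sum_congr rfl fun ω _ => ?_
  simp [Prod.ext_iff, ite_and, Finset.sum_ite_eq]

lemma probOf_marg_midL (μ : FinProb Ω) (X : Ω → α) (Z : Ω → δ) (Y : Ω → β) (x : α) (y : β) :
    probOf μ (fun ω => (X ω, Y ω)) (x, y)
      = ∑ z, probOf μ (fun ω => ((X ω, Z ω), Y ω)) ((x, z), y) := by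
  unfold probOf
  rw [Finset.sum_comm]
  refine Finset.sum_congr rfl fun ω _ => ?_
  simp [Prod.ext_iff, ite_and, Finset.sum_ite_eq]

lemma probOf_marg_midR (μ : FinProb Ω) (X : Ω → α) (Z : Ω → δ) (Y : Ω → β) (z : δ) (y : β) :
    probOf μ (fun ω => (Z ω, Y ω)) (z, y)
      = ∑ x, probOf μ (fun ω => ((X ω, Z ω), Y ω)) ((x, z), y) := by
  unfold probOf
  rw [Finset.sum_comm]
  refine Finset.sum_congr rfl fun ω _ => ?_
  simp only [Prod.ext_iff, ite_and]
  by_cases hz : Z ω = z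
  · by_cases hy : Y ω = y
    · simp [hz, hy, Finset.sum_ite_eq]
    · simp [hz, hy]
  · simp [hz]

/-- Strong subadditivity: `H(X,Z,Y) + H(Y) ≤ H(X,Y) + H(Z,Y)`. -/
lemma ssa (μ : FinProb Ω) (X : Ω → α) (Z : Ω → δ) (Y : Ω → β) :
    entropy μ (fun ω => ((X ω, Z ω), Y ω)) + entropy μ Y
      ≤ entropy μ (fun ω => (X ω, Y ω)) + entropy μ (fun ω => (Z ω, Y ω)) := by
  have hJ : ∀ (x : α) (z : δ) (y : β),
      0 ≤ probOf μ (fun ω => ((X ω, Z ω), Y ω)) ((x, z), y) :=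
    fun x z y => probOf_nonneg μ _ _
  have key := key_sum_ineq (fun x z y => probOf μ (fun ω => ((X ω, Z ω), Y ω)) ((x, z), y)) hJ
  have e1 : entropy μ (fun ω => ((X ω, Z ω), Y ω))
      = ∑ x, ∑ z, ∑ y, Real.negMulLog (probOf μ (fun ω => ((X ω, Z ω), Y ω)) ((x, z), y)) := by
    rw [entropy, Fintype.sum_prod_type]
    rw [Fintype.sum_prod_type]
  have e2 : entropy μ Y
      = ∑ y, Real.negMulLog (∑ x, ∑ z, probOf μ (fun ω => ((X ω, Z ω), Y ω)) ((x, z), y)) := by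
    rw [entropy]
    refine Finset.sum_congr rfl fun y _ => ?_
    rw [probOf_marg_snd' μ (fun ω => (X ω, Z ω)) Y y, Fintype.sum_prod_type]
  have e3 : entropy μ (fun ω => (X ω, Y ω))
      = ∑ x, ∑ y, Real.negMulLog (∑ z, probOf μ (fun ω => ((X ω, Z ω), Y ω)) ((x, z), y)) := by
    rw [entropy, Fintype.sum_prod_type]
    refine Finset.sum_congr rfl fun x _ => Finset.sum_congr rfl fun y _ => ?_
    rw [probOf_marg_midL μ X Z Y x y]
  have e4 : entropy μ (fun ω => (Z ω, Y ω))
      = ∑ z, ∑ y, Real.negMulLog (∑ x, probOf μ (fun ω => ((X ω, Z ω), Y ω)) ((x, z), y)) := by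
    rw [entropy, Fintype.sum_prod_type]
    refine Finset.sum_congr rfl fun z _ => Finset.sum_congr rfl fun y _ => ?_
    rw [probOf_marg_midR μ X Z Y z y]
  rw [e1, e2, e3, e4]
  exact key

/-- Entropy of a constant (unit-valued) variable is zero. -/
lemma entropy_unit (μ : FinProb Ω) : entropy μ (fun _ : Ω => ()) = 0 := by
  rw [entropy]
  have : probOf μ (fun _ : Ω => ()) () = 1 := by
    rw [probOf]; simp [μ.sum_one]
  simp [this]

/-- Subadditivity: `H(X,Z) ≤ H(X) + H(Z)`. -/
lemma subadd (μ : FinProb Ω) (X : Ω → α) (Z : Ω → δ) :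
    entropy μ (fun ω => (X ω, Z ω)) ≤ entropy μ X + entropy μ Z := by
  have h := ssa μ X Z (fun _ : Ω => ())
  have h1 : entropy μ (fun ω => ((X ω, Z ω), ())) = entropy μ (fun ω => (X ω, Z ω)) :=
    entropy_congr_inj μ _ _ (fun p => (p, ())) (fun a b hab => by simpa using hab)
      (fun ω => rfl)
  have h2 : entropy μ (fun ω => (X ω, ())) = entropy μ X :=
    entropy_congr_inj μ _ _ (fun a => (a, ())) (fun a b hab => by simpa using hab)
      (fun ω => rfl)
  have h3 : entropy μ (fun ω => (Z ω, ())) = entropy μ Z :=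
    entropy_congr_inj μ _ _ (fun a => (a, ())) (fun a b hab => by simpa using hab)
      (fun ω => rfl)
  rw [h1, h2, h3, entropy_unit] at h
  linarith

end Aux

/-- Alternative upper bound: under the representation-learning Markov assumptions,
`I(Xᵛ,Xˡ;Tᵛ,Tˡ) ≤ (3/2)[I(Xᵛ;Tᵛ) + I(Xˡ;Tˡ)]`. -/
theorem jointMI_le_three_halves {Ω αv αl γ : Type} [Fintype Ω]
    [Fintype αv] [DecidableEq αv] [Fintype αl] [DecidableEq αl] [Fintype γ] [DecidableEq γ]
    (μ : FinProb Ω) (Xv : Ω → αv) (Xl : Ω → αl) (Tv Tl : Ω → γ)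
    (hMv : condMutualInfo μ Tv (fun ω => (Xl ω, Tl ω)) Xv = 0)
    (hMl : condMutualInfo μ Tl (fun ω => (Xv ω, Tv ω)) Xl = 0) :
    mutualInfo μ (fun ω => (Xv ω, Xl ω)) (fun ω => (Tv ω, Tl ω)) ≤
      (3 / 2) * (mutualInfo μ Xv Tv + mutualInfo μ Xl Tl) := by
  simp only [condMutualInfo, condEntropy] at hMv hMl
  simp only [mutualInfo]
  -- entropy identifications via injective re-pairings
  have e1 : entropy μ (fun ω => (Tv ω, Xv ω)) = entropy μ (fun ω => (Xv ω, Tv ω)) :=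
    entropy_congr_inj μ _ _ Prod.swap Prod.swap_injective (fun ω => rfl)
  have e2 : entropy μ (fun ω => (Tl ω, Xl ω)) = entropy μ (fun ω => (Xl ω, Tl ω)) :=
    entropy_congr_inj μ _ _ Prod.swap Prod.swap_injective (fun ω => rfl)
  have i3 : Function.Injective (fun p : γ × (αv × αl) => ((p.2.2, p.1), p.2.1)) := by
    rintro ⟨a, b, c⟩ ⟨a', b', c'⟩ h
    simp only [Prod.mk.injEq] at h ⊢
    tauto
  have e3 : entropy μ (fun ω => ((Xl ω, Tl ω), Xv ω))
      = entropy μ (fun ω => (Tl ω, (Xv ω, Xl ω))) :=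
    entropy_congr_inj μ (fun ω => (Tl ω, (Xv ω, Xl ω)))
      (fun ω => ((Xl ω, Tl ω), Xv ω)) _ i3 (fun ω => rfl)
  have i4 : Function.Injective
      (fun p : (αv × αl) × (γ × γ) => ((p.2.1, (p.1.2, p.2.2)), p.1.1)) := by
    rintro ⟨⟨a, b⟩, ⟨c, d⟩⟩ ⟨⟨a', b'⟩, ⟨c', d'⟩⟩ h
    simp only [Prod.mk.injEq] at h ⊢
    tauto
  have e4 : entropy μ (fun ω => ((Tv ω, (Xl ω, Tl ω)), Xv ω))
      = entropy μ (fun ω => ((Xv ω, Xl ω), (Tv ω, Tl ω))) :=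
    entropy_congr_inj μ (fun ω => ((Xv ω, Xl ω), (Tv ω, Tl ω)))
      (fun ω => ((Tv ω, (Xl ω, Tl ω)), Xv ω)) _ i4 (fun ω => rfl)
  have i5 : Function.Injective (fun p : γ × (αv × αl) => ((p.2.1, p.1), p.2.2)) := by
    rintro ⟨a, b, c⟩ ⟨a', b', c'⟩ h
    simp only [Prod.mk.injEq] at h ⊢
    tauto
  have e5 : entropy μ (fun ω => ((Xv ω, Tv ω), Xl ω))
      = entropy μ (fun ω => (Tv ω, (Xv ω, Xl ω))) :=
    entropy_congr_inj μ (fun ω => (Tv ω, (Xv ω, Xl ω)))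
      (fun ω => ((Xv ω, Tv ω), Xl ω)) _ i5 (fun ω => rfl)
  have i6 : Function.Injective
      (fun p : (αv × αl) × (γ × γ) => ((p.2.2, (p.1.1, p.2.1)), p.1.2)) := by
    rintro ⟨⟨a, b⟩, ⟨c, d⟩⟩ ⟨⟨a', b'⟩, ⟨c', d'⟩⟩ h
    simp only [Prod.mk.injEq] at h ⊢
    tauto
  have e6 : entropy μ (fun ω => ((Tl ω, (Xv ω, Tv ω)), Xl ω))
      = entropy μ (fun ω => ((Xv ω, Xl ω), (Tv ω, Tl ω))) :=
    entropy_congr_inj μ (fun ω => ((Xv ω, Xl ω), (Tv ω, Tl ω)))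
      (fun ω => ((Tl ω, (Xv ω, Tv ω)), Xl ω)) _ i6 (fun ω => rfl)
  have e7 : entropy μ (fun ω => ((Tv ω, Tl ω), (Xv ω, Xl ω)))
      = entropy μ (fun ω => ((Xv ω, Xl ω), (Tv ω, Tl ω))) :=
    entropy_congr_inj μ _ _ Prod.swap Prod.swap_injective (fun ω => rfl)
  -- strong subadditivity and subadditivity instances
  have hssa := ssa μ Tv Tl (fun ω => (Xv ω, Xl ω))
  have hsub1 := subadd μ Tv Tl
  have hsub2 := subadd μ Xv Tv
  have hsub3 := subadd μ Xl Tl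
  rw [e1, e4] at hMv
  rw [e3] at hMv
  rw [e2, e5, e6] at hMl
  rw [e7] at hssa
  linarith
end

section
/- For discrete random variables Y and T, the mutual information I(Y;T) is lower-bounded by the Barber–Agakov bound: I(Y;T) ≥ E_{p(y,t)}[log q(y|t)] + H(Y) for any conditional probability distribution (auxiliary decoder) q(y|t), with equality when q(y|t) = p(y|t). -/
open scoped BigOperators

/-- Barber–Agakov variational lower bound:
`I(Y;T) ≥ E_{p(y,t)}[log q(y|t)] + H(Y)` for any auxiliary decoder `q(y|t)`,
with equality when `q(y|t) = p(y|t)`. -/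
theorem barber_agakov_bound {Ω α β : Type} [Fintype Ω]
    [Fintype α] [DecidableEq α] [Fintype β] [DecidableEq β]
    (μ : FinProb Ω) (Y : Ω → α) (T : Ω → β)
    (q : α → β → ℝ) (hq0 : ∀ y t, 0 ≤ q y t)
    (hq1 : ∀ t, ∑ y, q y t = 1)
    (hqpos : ∀ y t, probOf μ (fun ω => (Y ω, T ω)) (y, t) ≠ 0 → 0 < q y t) :
    (mutualInfo μ Y T ≥
      (∑ y, ∑ t, probOf μ (fun ω => (Y ω, T ω)) (y, t) * Real.log (q y t)) + entropy μ Y) ∧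
    ((∀ y t, probOf μ T t ≠ 0 → q y t = condProb μ Y T y t) →
      mutualInfo μ Y T =
        (∑ y, ∑ t, probOf μ (fun ω => (Y ω, T ω)) (y, t) * Real.log (q y t)) + entropy μ Y) := by
  classical
  set P : α → β → ℝ := fun y t => probOf μ (fun ω => (Y ω, T ω)) (y, t) with hPdef
  set Pt : β → ℝ := fun t => probOf μ T t with hPtdef
  have hP0 : ∀ y t, 0 ≤ P y t := by
    intro y t
    apply Finset.sum_nonneg
    intro ω _
    split_ifs with h
    · exact μ.nonneg ω
    · exact le_rfl
  have hmarg : ∀ t, ∑ y, P y t = Pt t := by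
    intro t
    simp only [hPdef, hPtdef, probOf]
    rw [Finset.sum_comm]
    refine Finset.sum_congr rfl fun ω _ => ?_
    by_cases h : T ω = t
    · simp [Prod.ext_iff, h]
    · simp [Prod.ext_iff, h]
  have htot : ∑ t, Pt t = 1 := by
    simp only [hPtdef, probOf]
    rw [Finset.sum_comm]
    simpa using μ.sum_one
  have hPt0 : ∀ t, 0 ≤ Pt t := by
    intro t
    rw [← hmarg]
    exact Finset.sum_nonneg fun y _ => hP0 y t
  have hPle : ∀ y t, P y t ≤ Pt t := fun y t =>
    (hmarg t) ▸ Finset.single_le_sum (fun y' _ => hP0 y' t) (Finset.mem_univ y)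
  have hentT : entropy μ T = -∑ t, ∑ y, P y t * Real.log (Pt t) := by
    simp only [entropy, Real.negMulLog]
    rw [← Finset.sum_neg_distrib]
    refine Finset.sum_congr rfl fun t _ => ?_
    rw [← Finset.sum_mul, hmarg]
    ring
  have hentPair : entropy μ (fun ω => (Y ω, T ω)) = -∑ t, ∑ y, P y t * Real.log (P y t) := by
    simp only [entropy, Real.negMulLog]
    rw [Fintype.sum_prod_type, Finset.sum_comm, ← Finset.sum_neg_distrib]
    refine Finset.sum_congr rfl fun t _ => ?_
    rw [← Finset.sum_neg_distrib]
    refine Finset.sum_congr rfl fun y _ => ?_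
    ring
  have hiden : mutualInfo μ Y T - ((∑ y, ∑ t, P y t * Real.log (q y t)) + entropy μ Y)
      = ∑ t, ∑ y, P y t * (Real.log (P y t) - Real.log (Pt t) - Real.log (q y t)) := by
    rw [mutualInfo, hentT, hentPair,
      Finset.sum_comm (f := fun y t => P y t * Real.log (q y t))]
    have expand : ∑ t, ∑ y, P y t * (Real.log (P y t) - Real.log (Pt t) - Real.log (q y t))
        = (∑ t, ∑ y, P y t * Real.log (P y t)) - (∑ t, ∑ y, P y t * Real.log (Pt t))
          - (∑ t, ∑ y, P y t * Real.log (q y t)) := by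
      simp [mul_sub, Finset.sum_sub_distrib]
    rw [expand]
    ring
  have hpoint : ∀ t y, P y t - Pt t * q y t
      ≤ P y t * (Real.log (P y t) - Real.log (Pt t) - Real.log (q y t)) := by
    intro t y
    rcases eq_or_lt_of_le (hP0 y t) with h0 | hpos
    · rw [← h0]
      have : (0:ℝ) ≤ Pt t * q y t := mul_nonneg (hPt0 t) (hq0 y t)
      simp
      linarith
    · have hqp : 0 < q y t := hqpos y t (by positivity)
      have hPtp : 0 < Pt t := lt_of_lt_of_le hpos (hPle y t)
      have hx : 0 < Pt t * q y t / P y t := by positivity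
      have hlog := Real.log_le_sub_one_of_pos hx
      rw [Real.log_div (by positivity) (ne_of_gt hpos), Real.log_mul (ne_of_gt hPtp) (ne_of_gt hqp)] at hlog
      have h2 : (1 : ℝ) - Pt t * q y t / P y t ≤ Real.log (P y t) - Real.log (Pt t) - Real.log (q y t) := by
        linarith
      have h3 := mul_le_mul_of_nonneg_left h2 (le_of_lt hpos)
      calc P y t - Pt t * q y t = P y t * (1 - Pt t * q y t / P y t) := by
            field_simp
          _ ≤ _ := h3
  have hzero : (0:ℝ) = ∑ t, ∑ y, (P y t - Pt t * q y t) := by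
    have : ∀ t, ∑ y, (P y t - Pt t * q y t) = Pt t - Pt t := by
      intro t
      rw [Finset.sum_sub_distrib, hmarg, ← Finset.mul_sum, hq1, mul_one]
    simp [this]
  have hgap : 0 ≤ ∑ t, ∑ y, P y t * (Real.log (P y t) - Real.log (Pt t) - Real.log (q y t)) := by
    rw [hzero]
    exact Finset.sum_le_sum fun t _ => Finset.sum_le_sum fun y _ => hpoint t y
  constructor
  · linarith
  · intro heq
    have hz : ∀ t y, P y t * (Real.log (P y t) - Real.log (Pt t) - Real.log (q y t)) = 0 := by
      intro t y
      rcases eq_or_ne (P y t) 0 with h0 | hne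
      · rw [h0]; ring
      · have hpos : 0 < P y t := lt_of_le_of_ne (hP0 y t) (Ne.symm hne)
        have hPtp : 0 < Pt t := lt_of_lt_of_le hpos (hPle y t)
        have hqeq : q y t = P y t / Pt t := by
          rw [heq y t (ne_of_gt hPtp), condProb]
        rw [hqeq, Real.log_div hne (ne_of_gt hPtp)]
        ring
    have : ∑ t, ∑ y, P y t * (Real.log (P y t) - Real.log (Pt t) - Real.log (q y t)) = 0 := by
      simp [hz]
    linarith
end
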